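/- Let q ∈ ℝᵏ be a probability vector with all entries positive and q_min := min_i q_i. The weighted normalized ℓ₁ distance d(x,y) := (Σ_i q_i|x_i−y_i|) / max{‖x‖∞,‖y‖∞} satisfies the ρ-relaxed triangle inequality with ρ = k/q_min²: for all x, y, z ∈ ℝᵏ, d(x,y) ≤ (k/q_min²)·(d(x,z) + d(z,y)). -/

import Mathlib

/-- Scalar normalized distance `|a-b|/max|a||b|` is a metric on ℝ. -/
lemma scalar_tri (a b c : ℝ) :
    |a - b| / max |a| |b| ≤ |a - c| / max |a| |c| + |c - b| / max |c| |b| := by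
  rcases le_or_gt (max |a| |b|) 0 with hM | hM
  · have ha : a = 0 := abs_eq_zero.mp
      (le_antisymm ((le_max_left _ _).trans hM) (abs_nonneg a))
    have hb : b = 0 := abs_eq_zero.mp
      (le_antisymm ((le_max_right _ _).trans hM) (abs_nonneg b))
    subst ha; subst hb
    simp only [sub_zero, zero_sub, sub_self, abs_zero, zero_div]
    positivity
  · have ha : |a| ≤ max |a| |b| := le_max_left _ _
    have hb : |b| ≤ max |a| |b| := le_max_right _ _
    rcases le_or_gt |c| (max |a| |b|) with hc | hc
    · rcases le_or_gt (max |a| |c|) 0 with hA | hA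
      · have ha0 : a = 0 := abs_eq_zero.mp
          (le_antisymm ((le_max_left _ _).trans hA) (abs_nonneg a))
        have hc0 : c = 0 := abs_eq_zero.mp
          (le_antisymm ((le_max_right _ _).trans hA) (abs_nonneg c))
        subst ha0; subst hc0
        simp
      · rcases le_or_gt (max |c| |b|) 0 with hB | hB
        · have hc0 : c = 0 := abs_eq_zero.mp
            (le_antisymm ((le_max_left _ _).trans hB) (abs_nonneg c))
          have hb0 : b = 0 := abs_eq_zero.mp
            (le_antisymm ((le_max_right _ _).trans hB) (abs_nonneg b))
          subst hc0; subst hb0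
          simp
        · calc |a - b| / max |a| |b| ≤ (|a - c| + |c - b|) / max |a| |b| := by
                gcongr
                exact abs_sub_le a c b
            _ = |a - c| / max |a| |b| + |c - b| / max |a| |b| := add_div _ _ _
            _ ≤ |a - c| / max |a| |c| + |c - b| / max |c| |b| :=
                add_le_add
                  (div_le_div_of_nonneg_left (abs_nonneg _) hA (max_le ha hc))
                  (div_le_div_of_nonneg_left (abs_nonneg _) hB (max_le hc hb))
    · -- |c| > max |a| |b|
      have hA : max |a| |c| = |c| := max_eq_right (ha.trans hc.le)
      have hB : max |c| |b| = |c| := max_eq_left (hb.trans hc.le)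
      have hs : 0 < |c| := hM.trans hc
      rw [hA, hB, ← add_div, div_le_div_iff₀ hM hs]
      rcases le_total 0 c with hc0 | hc0
      · have hcabs : |c| = c := abs_of_nonneg hc0
        have hac : a ≤ max |a| |b| := (le_abs_self a).trans ha
        have hbc : b ≤ max |a| |b| := (le_abs_self b).trans hb
        have ha' : -(max |a| |b|) ≤ a := (neg_le_neg ha).trans (neg_abs_le a)
        have hb' : -(max |a| |b|) ≤ b := (neg_le_neg hb).trans (neg_abs_le b)
        have h1 : |a - c| = c - a := by
          rw [abs_sub_comm]; exact abs_of_nonneg (by rw [hcabs] at hc; linarith)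
        have h2 : |c - b| = c - b := abs_of_nonneg (by rw [hcabs] at hc; linarith)
        rw [h1, h2, hcabs]
        rw [hcabs] at hc
        rcases le_total b a with h3 | h3
        · rw [abs_of_nonneg (by linarith : (0:ℝ) ≤ a - b)]
          nlinarith [mul_nonneg (by linarith : (0:ℝ) ≤ c - max |a| |b|)
            (by linarith : (0:ℝ) ≤ max |a| |b| - a),
            mul_nonneg (by linarith : (0:ℝ) ≤ c - max |a| |b|)
            (by linarith : (0:ℝ) ≤ max |a| |b| + b),
            mul_nonneg hM.le (by linarith : (0:ℝ) ≤ max |a| |b| - a)]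
        · rw [abs_of_nonpos (by linarith : a - b ≤ (0:ℝ))]
          nlinarith [mul_nonneg (by linarith : (0:ℝ) ≤ c - max |a| |b|)
            (by linarith : (0:ℝ) ≤ max |a| |b| - b),
            mul_nonneg (by linarith : (0:ℝ) ≤ c - max |a| |b|)
            (by linarith : (0:ℝ) ≤ max |a| |b| + a),
            mul_nonneg hM.le (by linarith : (0:ℝ) ≤ max |a| |b| - b)]
      · have hcabs : |c| = -c := abs_of_nonpos hc0
        have ha' : -(max |a| |b|) ≤ a := (neg_le_neg ha).trans (neg_abs_le a)
        have hb' : -(max |a| |b|) ≤ b := (neg_le_neg hb).trans (neg_abs_le b)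
        have hac : a ≤ max |a| |b| := (le_abs_self a).trans ha
        have hbc : b ≤ max |a| |b| := (le_abs_self b).trans hb
        have hcM : -c > max |a| |b| := by rw [hcabs] at hc; linarith
        have h1 : |a - c| = a - c := abs_of_nonneg (by linarith)
        have h2 : |c - b| = b - c := by
          rw [abs_sub_comm]; exact abs_of_nonneg (by linarith)
        rw [h1, h2, hcabs]
        rcases le_total b a with h3 | h3
        · rw [abs_of_nonneg (by linarith : (0:ℝ) ≤ a - b)]
          nlinarith [mul_nonneg (by linarith : (0:ℝ) ≤ -c - max |a| |b|)
            (by linarith : (0:ℝ) ≤ max |a| |b| + a),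
            mul_nonneg (by linarith : (0:ℝ) ≤ -c - max |a| |b|)
            (by linarith : (0:ℝ) ≤ max |a| |b| - b),
            mul_nonneg hM.le (by linarith : (0:ℝ) ≤ max |a| |b| + b)]
        · rw [abs_of_nonpos (by linarith : a - b ≤ (0:ℝ))]
          nlinarith [mul_nonneg (by linarith : (0:ℝ) ≤ -c - max |a| |b|)
            (by linarith : (0:ℝ) ≤ max |a| |b| + b),
            mul_nonneg (by linarith : (0:ℝ) ≤ -c - max |a| |b|)
            (by linarith : (0:ℝ) ≤ max |a| |b| - a),
            mul_nonneg hM.le (by linarith : (0:ℝ) ≤ max |a| |b| + a)]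

/-- The normalized distance `‖x-y‖/max ‖x‖ ‖y‖` satisfies a 2-relaxed triangle
inequality in any normed group. -/
lemma norm_tri {E : Type*} [NormedAddCommGroup E] (x y z : E) :
    ‖x - y‖ / max ‖x‖ ‖y‖ ≤
      2 * (‖x - z‖ / max ‖x‖ ‖z‖ + ‖z - y‖ / max ‖z‖ ‖y‖) := by
  have tri : ‖x - y‖ ≤ ‖x - z‖ + ‖z - y‖ := by
    calc ‖x - y‖ = ‖(x - z) + (z - y)‖ := by rw [sub_add_sub_cancel]
      _ ≤ ‖x - z‖ + ‖z - y‖ := norm_add_le _ _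
  rcases le_or_gt (max ‖x‖ ‖y‖) 0 with hM | hM
  · have hx : x = 0 := norm_eq_zero.mp
      (le_antisymm ((le_max_left _ _).trans hM) (norm_nonneg x))
    have hy : y = 0 := norm_eq_zero.mp
      (le_antisymm ((le_max_right _ _).trans hM) (norm_nonneg y))
    subst hx; subst hy
    simp only [sub_self, norm_zero, zero_div]
    positivity
  · have hx : ‖x‖ ≤ max ‖x‖ ‖y‖ := le_max_left _ _
    have hy : ‖y‖ ≤ max ‖x‖ ‖y‖ := le_max_right _ _
    rcases le_or_gt ‖z‖ (max ‖x‖ ‖y‖) with hz | hz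
    · rcases le_or_gt (max ‖x‖ ‖z‖) 0 with hA | hA
      · have hx0 : x = 0 := norm_eq_zero.mp
          (le_antisymm ((le_max_left _ _).trans hA) (norm_nonneg x))
        have hz0 : z = 0 := norm_eq_zero.mp
          (le_antisymm ((le_max_right _ _).trans hA) (norm_nonneg z))
        subst hx0; subst hz0
        simp only [sub_self, norm_zero, max_self, div_zero, zero_sub, norm_neg, zero_add]
        have h0 : (0:ℝ) ≤ ‖y‖ / max 0 ‖y‖ := by positivity
        linarith
      · rcases le_or_gt (max ‖z‖ ‖y‖) 0 with hB | hB
        · have hz0 : z = 0 := norm_eq_zero.mp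
            (le_antisymm ((le_max_left _ _).trans hB) (norm_nonneg z))
          have hy0 : y = 0 := norm_eq_zero.mp
            (le_antisymm ((le_max_right _ _).trans hB) (norm_nonneg y))
          subst hz0; subst hy0
          simp only [sub_self, norm_zero, max_self, div_zero, sub_zero, add_zero]
          have h0 : (0:ℝ) ≤ ‖x‖ / max ‖x‖ 0 := by positivity
          linarith
        · have key : ‖x - y‖ / max ‖x‖ ‖y‖ ≤
              ‖x - z‖ / max ‖x‖ ‖z‖ + ‖z - y‖ / max ‖z‖ ‖y‖ := by
            calc ‖x - y‖ / max ‖x‖ ‖y‖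
                ≤ (‖x - z‖ + ‖z - y‖) / max ‖x‖ ‖y‖ := by gcongr
              _ = ‖x - z‖ / max ‖x‖ ‖y‖ + ‖z - y‖ / max ‖x‖ ‖y‖ := add_div _ _ _
              _ ≤ ‖x - z‖ / max ‖x‖ ‖z‖ + ‖z - y‖ / max ‖z‖ ‖y‖ :=
                  add_le_add
                    (div_le_div_of_nonneg_left (norm_nonneg _) hA (max_le hx hz))
                    (div_le_div_of_nonneg_left (norm_nonneg _) hB (max_le hz hy))
          have h1 : (0:ℝ) ≤ ‖x - z‖ / max ‖x‖ ‖z‖ := by positivity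
          have h2 : (0:ℝ) ≤ ‖z - y‖ / max ‖z‖ ‖y‖ := by positivity
          linarith
    · -- ‖z‖ > max ‖x‖ ‖y‖
      have hA : max ‖x‖ ‖z‖ = ‖z‖ := max_eq_right (hx.trans hz.le)
      have hB : max ‖z‖ ‖y‖ = ‖z‖ := max_eq_left (hy.trans hz.le)
      have hs : 0 < ‖z‖ := hM.trans hz
      rw [hA, hB, ← add_div, ← mul_div_assoc, div_le_div_iff₀ hM hs]
      have h1 : ‖z‖ - ‖x‖ ≤ ‖x - z‖ := by
        rw [norm_sub_rev]; exact norm_sub_norm_le z x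
      have h2 : ‖z‖ - ‖y‖ ≤ ‖z - y‖ := norm_sub_norm_le z y
      have h4 : ‖x - y‖ ≤ ‖x‖ + ‖y‖ := norm_sub_le x y
      have hxy0 : (0:ℝ) ≤ ‖x - y‖ := norm_nonneg _
      rcases le_total ‖z‖ (2 * max ‖x‖ ‖y‖) with hcase | hcase
      · nlinarith [mul_le_mul_of_nonneg_left tri (by linarith : (0:ℝ) ≤ 2 * max ‖x‖ ‖y‖),
          mul_le_mul_of_nonneg_left hcase hxy0]
      · nlinarith [mul_le_mul_of_nonneg_left (le_trans (by linarith) (add_le_add h1 h2) :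
            2 * ‖z‖ - 2 * max ‖x‖ ‖y‖ ≤ ‖x - z‖ + ‖z - y‖)
            (by linarith : (0:ℝ) ≤ 2 * max ‖x‖ ‖y‖),
          mul_le_mul_of_nonneg_right h4 hs.le]

/-- For a probability vector `q` with positive entries and `q_min = min_i q_i`,
the weighted normalized ℓ₁ distance `d(x,y) = (Σ_i q_i|x_i−y_i|)/max{‖x‖∞,‖y‖∞}`
satisfies the `(k/q_min²)`-relaxed triangle inequality. -/
theorem stmt6 (k : ℕ) (hk : 0 < k) (q : Fin k → ℝ) (hq : ∀ i, 0 < q i)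
    (hq1 : ∑ i, q i = 1) (qmin : ℝ) (hqmin : qmin = ⨅ i, q i) (x y z : Fin k → ℝ) :
    (∑ i, q i * |x i - y i|) / max ‖x‖ ‖y‖ ≤
      ((k : ℝ) / qmin ^ 2) *
        ((∑ i, q i * |x i - z i|) / max ‖x‖ ‖z‖ +
          (∑ i, q i * |z i - y i|) / max ‖z‖ ‖y‖) := by
  haveI : Nonempty (Fin k) := ⟨⟨0, hk⟩⟩
  have hqmin_le : ∀ i, qmin ≤ q i := by
    intro i
    rw [hqmin]
    exact ciInf_le (Set.Finite.bddBelow (Set.finite_range q)) i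
  have hqmin_pos : 0 < qmin := by
    obtain ⟨j, hj⟩ := Finite.exists_min q
    have hqj : qmin = q j := le_antisymm (hqmin_le j) (by rw [hqmin]; exact le_ciInf hj)
    rw [hqj]; exact hq j
  have hq_le_one : ∀ i, q i ≤ 1 := by
    intro i
    rw [← hq1]
    exact Finset.single_le_sum (fun j _ => (hq j).le) (Finset.mem_univ i)
  have hqmin_le_one : qmin ≤ 1 := (hqmin_le ⟨0, hk⟩).trans (hq_le_one _)
  -- sum bounds
  have hub : ∀ u v : Fin k → ℝ, (∑ i, q i * |u i - v i|) ≤ ‖u - v‖ := by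
    intro u v
    calc ∑ i, q i * |u i - v i| ≤ ∑ i, q i * ‖u - v‖ := by
          apply Finset.sum_le_sum
          intro i _
          have h := norm_le_pi_norm (u - v) i
          simp only [Pi.sub_apply, Real.norm_eq_abs] at h
          exact mul_le_mul_of_nonneg_left h (hq i).le
      _ = ‖u - v‖ := by rw [← Finset.sum_mul, hq1, one_mul]
  have hSnn : ∀ u v : Fin k → ℝ, 0 ≤ ∑ i, q i * |u i - v i| := fun u v =>
    Finset.sum_nonneg fun i _ => mul_nonneg (hq i).le (abs_nonneg _)
  have hlb : ∀ u v : Fin k → ℝ, qmin * ‖u - v‖ ≤ ∑ i, q i * |u i - v i| := by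
    intro u v
    have hnorm : ‖u - v‖ ≤ (∑ i, q i * |u i - v i|) / qmin := by
      apply (pi_norm_le_iff_of_nonneg (div_nonneg (hSnn u v) hqmin_pos.le)).mpr
      intro i
      rw [Pi.sub_apply, Real.norm_eq_abs, le_div_iff₀ hqmin_pos]
      calc |u i - v i| * qmin ≤ |u i - v i| * q i :=
            mul_le_mul_of_nonneg_left (hqmin_le i) (abs_nonneg _)
        _ = q i * |u i - v i| := mul_comm _ _
        _ ≤ ∑ j, q j * |u j - v j| :=
            Finset.single_le_sum (f := fun j => q j * |u j - v j|)
              (fun j _ => mul_nonneg (hq j).le (abs_nonneg _)) (Finset.mem_univ i)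
    calc qmin * ‖u - v‖ ≤ qmin * ((∑ i, q i * |u i - v i|) / qmin) :=
          mul_le_mul_of_nonneg_left hnorm hqmin_pos.le
      _ = ∑ i, q i * |u i - v i| := by field_simp
  -- from LHS up to ‖x-y‖/M
  have step1 : (∑ i, q i * |x i - y i|) / max ‖x‖ ‖y‖ ≤ ‖x - y‖ / max ‖x‖ ‖y‖ := by
    rw [div_eq_mul_inv, div_eq_mul_inv]
    exact mul_le_mul_of_nonneg_right (hub x y) (by positivity)
  -- from q-terms down: qmin * (‖·‖/denom) ≤ term
  have step2 : ∀ u v : Fin k → ℝ,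
      qmin * (‖u - v‖ / max ‖u‖ ‖v‖) ≤ (∑ i, q i * |u i - v i|) / max ‖u‖ ‖v‖ := by
    intro u v
    rw [mul_div_assoc'] -- qmin * ‖u-v‖ / max
    rw [div_eq_mul_inv, div_eq_mul_inv]
    exact mul_le_mul_of_nonneg_right (hlb u v) (by positivity)
  set D := ‖x - z‖ / max ‖x‖ ‖z‖ + ‖z - y‖ / max ‖z‖ ‖y‖ with hD
  have hDnn : 0 ≤ D := by positivity
  have hRHS : ((k : ℝ) / qmin ^ 2) * qmin * D ≤
      ((k : ℝ) / qmin ^ 2) *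
        ((∑ i, q i * |x i - z i|) / max ‖x‖ ‖z‖ +
          (∑ i, q i * |z i - y i|) / max ‖z‖ ‖y‖) := by
    rw [mul_assoc]
    apply mul_le_mul_of_nonneg_left _ (by positivity)
    rw [hD, mul_add]
    exact add_le_add (step2 x z) (step2 z y)
  have hconst : ((k : ℝ) / qmin ^ 2) * qmin = (k : ℝ) / qmin := by
    field_simp
  rw [hconst] at hRHS
  refine le_trans ?_ hRHS
  refine le_trans step1 ?_
  -- now: ‖x-y‖/max ≤ (k/qmin) * D
  rcases eq_or_lt_of_le (Nat.one_le_iff_ne_zero.mpr hk.ne' : 1 ≤ k) with hk1 | hk2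
  · -- k = 1
    have hk1' : k = 1 := hk1.symm
    subst hk1'
    have hq0 : q 0 = 1 := by simpa [Fin.sum_univ_one] using hq1
    have hqmin1 : qmin = 1 := by
      rw [hqmin, ciInf_unique]
      exact hq0
    have hnorm1 : ∀ w : Fin 1 → ℝ, ‖w‖ = |w 0| := by
      intro w
      refine le_antisymm ((pi_norm_le_iff_of_nonneg (abs_nonneg _)).mpr fun i => ?_)
        ((Real.norm_eq_abs (w 0)) ▸ norm_le_pi_norm w 0)
      fin_cases i
      simp [Real.norm_eq_abs]
    have hsub : ∀ u v : Fin 1 → ℝ, ‖u - v‖ = |u 0 - v 0| := by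
      intro u v; rw [hnorm1 (u - v)]; rfl
    rw [hqmin1]
    norm_num
    rw [hD, hsub x y, hsub x z, hsub z y, hnorm1 x, hnorm1 y, hnorm1 z]
    exact scalar_tri (x 0) (y 0) (z 0)
  · -- k ≥ 2
    have hk2' : (2 : ℝ) ≤ (k : ℝ) := by exact_mod_cast hk2
    have hconst2 : (2 : ℝ) ≤ (k : ℝ) / qmin := by
      rw [le_div_iff₀ hqmin_pos]
      nlinarith
    calc ‖x - y‖ / max ‖x‖ ‖y‖ ≤ 2 * D := norm_tri x y z
      _ ≤ ((k : ℝ) / qmin) * D := mul_le_mul_of_nonneg_right hconst2 hDnn
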